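/- Let O ⊆ ℝⁿ be an open set, let σ₀ : O → ℝ be twice continuously differentiable with σ₀(x) > 0 for every x ∈ O, let η₀ : O → ℝ be continuous, let ω > 0, and let u : O → ℂ be twice continuously differentiable satisfying ∑_{i=1}^n ∂_i(σ₀ ∂_i u)(x) + ω² η₀(x) u(x) = 0 for all x ∈ O. Then the function v = σ₀^{1/2} u satisfies Δv(x) + ω² q(x) v(x) = 0 for all x ∈ O, where q = σ₀^{-1} η₀ − ω^{-2} γ₀ and γ₀ = σ₀^{-1/2} Δ(σ₀^{1/2}). -/

import Mathlib

open scoped BigOperators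

/-- Partial derivative of a complex-valued function on `ℝⁿ` in the `i`-th standard
coordinate direction. -/
noncomputable def pdC {n : ℕ} (i : Fin n) (f : EuclideanSpace ℝ (Fin n) → ℂ)
    (x : EuclideanSpace ℝ (Fin n)) : ℂ :=
  fderiv ℝ f x (EuclideanSpace.single i 1)

/-- Partial derivative of a real-valued function on `ℝⁿ` in the `i`-th standard
coordinate direction. -/
noncomputable def pdR {n : ℕ} (i : Fin n) (f : EuclideanSpace ℝ (Fin n) → ℝ)
    (x : EuclideanSpace ℝ (Fin n)) : ℝ :=
  fderiv ℝ f x (EuclideanSpace.single i 1)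

/-- Euclidean Laplacian of a complex-valued function. -/
noncomputable def lapC {n : ℕ} (f : EuclideanSpace ℝ (Fin n) → ℂ)
    (x : EuclideanSpace ℝ (Fin n)) : ℂ :=
  ∑ i : Fin n, pdC i (fun y => pdC i f y) x

/-- Euclidean Laplacian of a real-valued function. -/
noncomputable def lapR {n : ℕ} (f : EuclideanSpace ℝ (Fin n) → ℝ)
    (x : EuclideanSpace ℝ (Fin n)) : ℝ :=
  ∑ i : Fin n, pdR i (fun y => pdR i f y) x

lemma pdC_congr {n : ℕ} (i : Fin n) {f g : EuclideanSpace ℝ (Fin n) → ℂ}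
    {x} (h : f =ᶠ[nhds x] g) : pdC i f x = pdC i g x := by
  unfold pdC; rw [h.fderiv_eq]

lemma fderiv_ofReal_comp {n : ℕ} {f : EuclideanSpace ℝ (Fin n) → ℝ} {x}
    (hf : DifferentiableAt ℝ f x) (v) :
    fderiv ℝ (fun y => (f y : ℂ)) x v = (fderiv ℝ f x v : ℂ) := by
  have : fderiv ℝ (fun y => (f y : ℂ)) x = Complex.ofRealCLM.comp (fderiv ℝ f x) :=
    (Complex.ofRealCLM.hasFDerivAt.comp x hf.hasFDerivAt).fderiv
  rw [this]; rfl

lemma pdC_mul {n : ℕ} (i : Fin n) {f : EuclideanSpace ℝ (Fin n) → ℝ}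
    {g : EuclideanSpace ℝ (Fin n) → ℂ} {x}
    (hf : DifferentiableAt ℝ f x) (hg : DifferentiableAt ℝ g x) :
    pdC i (fun y => (f y : ℂ) * g y) x
      = (pdR i f x : ℂ) * g x + (f x : ℂ) * pdC i g x := by
  have hf' : DifferentiableAt ℝ (fun y => (f y : ℂ)) x :=
    Complex.ofRealCLM.differentiableAt.comp x hf
  unfold pdC pdR
  rw [fderiv_fun_mul hf' hg]
  simp [fderiv_ofReal_comp hf]; ring

lemma pdC_add {n : ℕ} (i : Fin n) {f g : EuclideanSpace ℝ (Fin n) → ℂ} {x}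
    (hf : DifferentiableAt ℝ f x) (hg : DifferentiableAt ℝ g x) :
    pdC i (fun y => f y + g y) x = pdC i f x + pdC i g x := by
  unfold pdC; rw [fderiv_fun_add hf hg]; rfl

lemma differentiableAt_pdC {n : ℕ} (i : Fin n) {u : EuclideanSpace ℝ (Fin n) → ℂ} {x}
    (h : ContDiffAt ℝ 2 u x) : DifferentiableAt ℝ (fun y => pdC i u y) x := by
  have h1 : ContDiffAt ℝ 1 (fderiv ℝ u) x := h.fderiv_right (by norm_num)
  exact ((ContinuousLinearMap.apply ℝ ℂ
    (EuclideanSpace.single i 1)).differentiableAt).comp x (h1.differentiableAt one_ne_zero)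

lemma differentiableAt_pdR {n : ℕ} (i : Fin n) {u : EuclideanSpace ℝ (Fin n) → ℝ} {x}
    (h : ContDiffAt ℝ 2 u x) : DifferentiableAt ℝ (fun y => pdR i u y) x := by
  have h1 : ContDiffAt ℝ 1 (fderiv ℝ u) x := h.fderiv_right (by norm_num)
  exact ((ContinuousLinearMap.apply ℝ ℝ
    (EuclideanSpace.single i 1)).differentiableAt).comp x (h1.differentiableAt one_ne_zero)

/-- If `u` solves the heterogeneous Helmholtz equation `∑ᵢ ∂ᵢ(σ₀ ∂ᵢ u) + ω² η₀ u = 0`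
on an open set `O`, then `v = σ₀^{1/2} u` solves `Δv + ω² q v = 0` on `O`, where
`q = σ₀⁻¹ η₀ − ω⁻² γ₀` and `γ₀ = σ₀^{-1/2} Δ(σ₀^{1/2})`. -/
theorem gauge_transformed_helmholtz
    {n : ℕ} (O : Set (EuclideanSpace ℝ (Fin n))) (hO : IsOpen O)
    (σ₀ η₀ : EuclideanSpace ℝ (Fin n) → ℝ) (u : EuclideanSpace ℝ (Fin n) → ℂ)
    (hσ₀ : ContDiffOn ℝ 2 σ₀ O) (hσ₀pos : ∀ x ∈ O, 0 < σ₀ x)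
    (hη₀ : ContinuousOn η₀ O) (ω : ℝ) (hω : 0 < ω)
    (hu : ContDiffOn ℝ 2 u O)
    (huEq : ∀ x ∈ O,
      (∑ i : Fin n, pdC i (fun y => ((σ₀ y : ℝ) : ℂ) * pdC i u y) x)
        + ((ω ^ 2 * η₀ x : ℝ) : ℂ) * u x = 0) :
    ∀ x ∈ O,
      lapC (fun y => ((Real.sqrt (σ₀ y) : ℝ) : ℂ) * u y) x
        + ((ω ^ 2 * ((σ₀ x)⁻¹ * η₀ x
              - (ω ^ 2)⁻¹ * ((Real.sqrt (σ₀ x))⁻¹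
                  * lapR (fun y => Real.sqrt (σ₀ y)) x)) : ℝ) : ℂ)
          * (((Real.sqrt (σ₀ x) : ℝ) : ℂ) * u x) = 0 := by
  intro x hx
  set s : EuclideanSpace ℝ (Fin n) → ℝ := fun y => Real.sqrt (σ₀ y) with hsdef
  have hσx : 0 < σ₀ x := hσ₀pos x hx
  have hsx : 0 < s x := Real.sqrt_pos.mpr hσx
  have hσAt : ContDiffAt ℝ 2 σ₀ x := hσ₀.contDiffAt (hO.mem_nhds hx)
  have huAt : ContDiffAt ℝ 2 u x := hu.contDiffAt (hO.mem_nhds hx)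
  have hsAt : ∀ y ∈ O, ContDiffAt ℝ 2 s y := fun y hy =>
    (Real.contDiffAt_sqrt (hσ₀pos y hy).ne').comp y (hσ₀.contDiffAt (hO.mem_nhds hy))
  have huDAt : ∀ y ∈ O, DifferentiableAt ℝ u y := fun y hy =>
    (hu.contDiffAt (hO.mem_nhds hy)).differentiableAt two_ne_zero
  have hsDAt : ∀ y ∈ O, DifferentiableAt ℝ s y := fun y hy =>
    (hsAt y hy).differentiableAt two_ne_zero
  have hσD : DifferentiableAt ℝ σ₀ x := hσAt.differentiableAt two_ne_zero
  -- chain rule : ∂ᵢ σ₀ = 2 s ∂ᵢ s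
  have hders : HasFDerivAt s ((1 / (2 * Real.sqrt (σ₀ x))) • fderiv ℝ σ₀ x) x :=
    (Real.hasDerivAt_sqrt hσx.ne').comp_hasFDerivAt x hσD.hasFDerivAt
  have hchain : ∀ i : Fin n, pdR i σ₀ x = 2 * s x * pdR i s x := by
    intro i
    have h1 : pdR i s x = (1 / (2 * s x)) * pdR i σ₀ x := by
      unfold pdR; rw [hders.fderiv]; simp [hsdef]
    rw [h1]; field_simp
  -- second derivatives of s * u
  have key : ∀ i : Fin n,
      pdC i (fun y => pdC i (fun z => ((s z : ℝ) : ℂ) * u z) y) x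
        = ((pdR i (fun y => pdR i s y) x : ℝ) : ℂ) * u x
          + ((pdR i s x : ℝ) : ℂ) * pdC i u x
          + (((pdR i s x : ℝ) : ℂ) * pdC i u x
              + ((s x : ℝ) : ℂ) * pdC i (fun y => pdC i u y) x) := by
    intro i
    have hEv : (fun y => pdC i (fun z => ((s z : ℝ) : ℂ) * u z) y)
        =ᶠ[nhds x] fun y => ((pdR i s y : ℝ) : ℂ) * u y + ((s y : ℝ) : ℂ) * pdC i u y := by
      filter_upwards [hO.mem_nhds hx] with y hy
      exact pdC_mul i (hsDAt y hy) (huDAt y hy)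
    have d1 : DifferentiableAt ℝ (fun y => ((pdR i s y : ℝ) : ℂ) * u y) x :=
      (Complex.ofRealCLM.differentiableAt.comp x
        (differentiableAt_pdR i (hsAt x hx))).mul (huDAt x hx)
    have d2 : DifferentiableAt ℝ (fun y => ((s y : ℝ) : ℂ) * pdC i u y) x :=
      (Complex.ofRealCLM.differentiableAt.comp x (hsDAt x hx)).mul
        (differentiableAt_pdC i huAt)
    have e1 : pdC i (fun y => ((pdR i s y : ℝ) : ℂ) * u y + ((s y : ℝ) : ℂ) * pdC i u y) x
        = pdC i (fun y => ((pdR i s y : ℝ) : ℂ) * u y) x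
          + pdC i (fun y => ((s y : ℝ) : ℂ) * pdC i u y) x := pdC_add i d1 d2
    have e2 : pdC i (fun y => ((pdR i s y : ℝ) : ℂ) * u y) x
        = ((pdR i (fun y => pdR i s y) x : ℝ) : ℂ) * u x
          + ((pdR i s x : ℝ) : ℂ) * pdC i u x :=
      pdC_mul i (differentiableAt_pdR i (hsAt x hx)) (huDAt x hx)
    have e3 : pdC i (fun y => ((s y : ℝ) : ℂ) * pdC i u y) x
        = ((pdR i s x : ℝ) : ℂ) * pdC i u x
          + ((s x : ℝ) : ℂ) * pdC i (fun y => pdC i u y) x :=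
      pdC_mul i (hsDAt x hx) (differentiableAt_pdC i huAt)
    rw [pdC_congr i hEv, e1, e2, e3]
  -- Laplacian of s * u
  have hlap : lapC (fun y => ((s y : ℝ) : ℂ) * u y) x
      = ((lapR s x : ℝ) : ℂ) * u x
        + 2 * (∑ i : Fin n, ((pdR i s x : ℝ) : ℂ) * pdC i u x)
        + ((s x : ℝ) : ℂ) * ∑ i : Fin n, pdC i (fun y => pdC i u y) x := by
    unfold lapC lapR
    rw [Finset.sum_congr rfl fun i _ => key i]
    push_cast
    rw [Finset.sum_mul, two_mul, Finset.mul_sum]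
    simp only [Finset.sum_add_distrib]
    ring
  -- rewritten Helmholtz equation
  have hEq2 : 2 * ((s x : ℝ) : ℂ) * (∑ i : Fin n, ((pdR i s x : ℝ) : ℂ) * pdC i u x)
      + ((σ₀ x : ℝ) : ℂ) * (∑ i : Fin n, pdC i (fun y => pdC i u y) x)
      + ((ω ^ 2 * η₀ x : ℝ) : ℂ) * u x = 0 := by
    have h := huEq x hx
    have hterm : ∀ i : Fin n, pdC i (fun y => ((σ₀ y : ℝ) : ℂ) * pdC i u y) x
        = ((2 * s x * pdR i s x : ℝ) : ℂ) * pdC i u x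
          + ((σ₀ x : ℝ) : ℂ) * pdC i (fun y => pdC i u y) x := by
      intro i
      rw [pdC_mul i hσD (differentiableAt_pdC i huAt), hchain i]
    rw [Finset.sum_congr rfl fun i _ => hterm i] at h
    rw [Finset.sum_add_distrib, ← Finset.mul_sum] at h
    have hS : ∑ i : Fin n, ((2 * s x * pdR i s x : ℝ) : ℂ) * pdC i u x
        = 2 * ((s x : ℝ) : ℂ) * ∑ i : Fin n, ((pdR i s x : ℝ) : ℂ) * pdC i u x := by
      rw [Finset.mul_sum]
      refine Finset.sum_congr rfl fun i _ => ?_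
      push_cast; ring
    rw [hS] at h
    exact h
  -- final algebra
  rw [hlap]
  have hσs : ((σ₀ x : ℝ) : ℂ) = ((s x : ℝ) : ℂ) ^ 2 := by
    rw [hsdef]; norm_cast; rw [Real.sq_sqrt hσx.le]
  set B : ℂ := ∑ i : Fin n, ((pdR i s x : ℝ) : ℂ) * pdC i u x with hB
  set Q : ℂ := ∑ i : Fin n, pdC i (fun y => pdC i u y) x with hQ
  rw [hσs] at hEq2
  have ha : ((s x : ℝ) : ℂ) ≠ 0 := by exact_mod_cast hsx.ne'
  have hwc : ((ω : ℝ) : ℂ) ≠ 0 := by exact_mod_cast hω.ne'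
  push_cast
  push_cast at hEq2
  rw [hσs]
  field_simp
  have hs' : ((s x : ℝ) : ℂ) * ((s x : ℝ) : ℂ)⁻¹ = 1 := mul_inv_cancel₀ ha
  linear_combination ((s x : ℝ) : ℂ) * hEq2
    - ((s x : ℝ) : ℂ) ^ 2 * ((lapR s x : ℝ) : ℂ) * u x * hs'
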